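/- Let B ≥ 1 and let (p,q) ∈ Rat_B be arbitrary. For t ∈ [0,1] define p_t(z) = e^{−2πiBt} p(e^{2πit} z) and q_t(z) = e^{−2πiBt} q(e^{2πit} z). Then each (p_t, q_t) is a pair of monic degree-B polynomials lying in Rat_B, (p_0,q_0) = (p_1,q_1) = (p,q), and Res(p_t, q_t) = e^{−2πiB²t}·Res(p,q) for all t; in particular, along this loop (which represents a 2π spatial rotation of the corresponding rational map) the resultant winds exactly −B² times around 0. -/

import Mathlib

open Polynomial Complex
open scoped Real

/-- The resultant `Res(p,q) = ∏_{i,j} (z_i - p_j)` of two monic polynomials, written as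
`∏_i q(z_i)` over the roots `z_i` of `p` (with multiplicity). -/
noncomputable def res (p q : Polynomial ℂ) : ℂ :=
  (p.roots.map fun z => q.eval z).prod

/-- `p_t(z) = e^{-2πiBt} p(e^{2πit} z)`: the 2π spatial rotation loop applied to `p`. -/
noncomputable def spinPoly (B : ℕ) (p : Polynomial ℂ) (t : ℝ) : Polynomial ℂ :=
  C (exp (-(2 * π * I * B * t))) * p.comp (C (exp (2 * π * I * t)) * X)

lemma spin_factor (B : ℕ) (p : Polynomial ℂ) (hpm : p.Monic) (hpd : p.natDegree = B) (t : ℝ) :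
    spinPoly B p t
      = (p.roots.map fun z => X - C ((exp (2 * π * I * t))⁻¹ * z)).prod := by
  have hu : exp (2 * π * I * (t:ℂ)) ≠ 0 := Complex.exp_ne_zero _
  have hcard : p.roots.card = B := by
    rw [← hpd]
    exact (splits_iff_card_roots.mp (IsAlgClosed.splits p))
  have hp : p = (p.roots.map fun z => X - C z).prod :=
    (IsAlgClosed.splits p).eq_prod_roots_of_monic hpm
  have hc : exp (-(2 * π * I * B * t)) * exp (2 * π * I * (t:ℂ)) ^ B = 1 := by
    rw [← Complex.exp_nat_mul, ← Complex.exp_add,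
      show -(2 * π * I * B * (t:ℂ)) + B * (2 * π * I * t) = 0 by ring, Complex.exp_zero]
  rw [spinPoly]
  conv_lhs => rw [hp]
  rw [multiset_prod_comp, Multiset.map_map]
  rw [Multiset.map_congr rfl (fun z _ => by
    show (X - C z).comp (C (exp (2 * π * I * (t:ℂ))) * X)
      = C (exp (2 * π * I * (t:ℂ))) * (X - C ((exp (2 * π * I * (t:ℂ)))⁻¹ * z))
    rw [sub_comp, X_comp, C_comp, mul_sub, ← C_mul, mul_inv_cancel_left₀ hu])]
  rw [show (p.roots.map fun z =>
        C (exp (2 * π * I * (t:ℂ))) * (X - C ((exp (2 * π * I * (t:ℂ)))⁻¹ * z)))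
      = p.roots.map fun z => (fun _ : ℂ => C (exp (2 * π * I * (t:ℂ)))) z *
          (fun z => X - C ((exp (2 * π * I * (t:ℂ)))⁻¹ * z)) z from rfl]
  rw [Multiset.prod_map_mul, Multiset.map_const', Multiset.prod_replicate, hcard,
    ← C_pow, ← mul_assoc, ← C_mul, hc, map_one, one_mul]

lemma res_ne_zero (B : ℕ) (p q : Polynomial ℂ) (hpm : p.Monic)
    (hnoroot : ∀ z : ℂ, ¬(p.eval z = 0 ∧ q.eval z = 0)) : res p q ≠ 0 := by
  unfold res
  apply Multiset.prod_ne_zero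
  intro h
  simp only [Multiset.mem_map] at h
  obtain ⟨z, hz, hq0⟩ := h
  exact hnoroot z ⟨isRoot_of_mem_roots hz, hq0⟩

lemma spin_res (B : ℕ) (p q : Polynomial ℂ)
    (hpm : p.Monic) (hpd : p.natDegree = B) (t : ℝ) :
    res (spinPoly B p t) (spinPoly B q t)
      = exp (-(2 * π * I * B ^ 2 * t)) * res p q := by
  have hu : exp (2 * π * I * (t:ℂ)) ≠ 0 := Complex.exp_ne_zero _
  have hcard : p.roots.card = B := by
    rw [← hpd]
    exact (splits_iff_card_roots.mp (IsAlgClosed.splits p))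
  have hroots : (spinPoly B p t).roots
      = p.roots.map fun z => (exp (2 * π * I * (t:ℂ)))⁻¹ * z := by
    rw [spin_factor B p hpm hpd t]
    rw [show (p.roots.map fun z => X - C ((exp (2 * π * I * (t:ℂ)))⁻¹ * z))
        = ((p.roots.map fun z => (exp (2 * π * I * (t:ℂ)))⁻¹ * z).map fun a => X - C a) by
      rw [Multiset.map_map]; rfl]
    exact roots_multiset_prod_X_sub_C _
  unfold res
  rw [hroots, Multiset.map_map]
  rw [Multiset.map_congr rfl (fun z _ => by
    show (spinPoly B q t).eval ((exp (2 * π * I * (t:ℂ)))⁻¹ * z)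
      = exp (-(2 * π * I * B * t)) * q.eval z
    simp only [spinPoly, eval_mul, eval_C, eval_comp, eval_X]
    rw [mul_inv_cancel_left₀ hu])]
  rw [show (p.roots.map fun z => exp (-(2 * π * I * B * (t:ℂ))) * q.eval z)
      = p.roots.map fun z => (fun _ : ℂ => exp (-(2 * π * I * B * (t:ℂ)))) z *
          (fun z => q.eval z) z from rfl]
  rw [Multiset.prod_map_mul, Multiset.map_const', Multiset.prod_replicate, hcard]
  congr 1
  rw [← Complex.exp_nat_mul]
  congr 1
  ring

/-- For `(p,q) ∈ Rat_B`, the `2π` spatial rotation loop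
`(p_t, q_t) = (e^{-2πiBt} p(e^{2πit}z), e^{-2πiBt} q(e^{2πit}z))` stays in `Rat_B`,
is a loop based at `(p,q)`, satisfies `Res(p_t,q_t) = e^{-2πiB²t}·Res(p,q)`, and along
it the resultant winds exactly `-B²` times around `0`. -/
theorem two_pi_rotation_loop (B : ℕ) (hB : 1 ≤ B) (p q : Polynomial ℂ)
    (hpm : p.Monic) (hpd : p.natDegree = B) (hqm : q.Monic) (hqd : q.natDegree = B)
    (hnoroot : ∀ z : ℂ, ¬(p.eval z = 0 ∧ q.eval z = 0)) :
    (∀ t ∈ Set.Icc (0:ℝ) 1,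
      (spinPoly B p t).Monic ∧ (spinPoly B p t).natDegree = B ∧
      (spinPoly B q t).Monic ∧ (spinPoly B q t).natDegree = B ∧
      (∀ z : ℂ, ¬((spinPoly B p t).eval z = 0 ∧ (spinPoly B q t).eval z = 0)) ∧
      res (spinPoly B p t) (spinPoly B q t)
        = exp (-(2 * π * I * B ^ 2 * t)) * res p q) ∧
    (spinPoly B p 0 = p ∧ spinPoly B q 0 = q ∧
      spinPoly B p 1 = p ∧ spinPoly B q 1 = q) ∧
    1 / (2 * π * I) *
        ∫ t in (0:ℝ)..1,
          deriv (fun s => res (spinPoly B p s) (spinPoly B q s)) t /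
            res (spinPoly B p t) (spinPoly B q t)
      = -((B : ℂ) ^ 2) := by
  have hmonic : ∀ (r : Polynomial ℂ), r.Monic → r.natDegree = B → ∀ t : ℝ,
      (spinPoly B r t).Monic ∧ (spinPoly B r t).natDegree = B := by
    intro r hrm hrd t
    rw [spin_factor B r hrm hrd t]
    constructor
    · exact monic_multiset_prod_of_monic _ _ fun z _ => monic_X_sub_C _
    · rw [show (r.roots.map fun z => X - C ((exp (2 * π * I * (t:ℂ)))⁻¹ * z))
          = ((r.roots.map fun z => (exp (2 * π * I * (t:ℂ)))⁻¹ * z).map fun a => X - C a) by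
        rw [Multiset.map_map]; rfl]
      rw [natDegree_multiset_prod_X_sub_C_eq_card, Multiset.card_map, ← hrd]
      exact (splits_iff_card_roots.mp (IsAlgClosed.splits r))
  have hnr : ∀ t : ℝ, ∀ z : ℂ,
      ¬((spinPoly B p t).eval z = 0 ∧ (spinPoly B q t).eval z = 0) := by
    intro t z ⟨h1, h2⟩
    simp only [spinPoly, eval_mul, eval_C, eval_comp, eval_X, mul_eq_zero] at h1 h2
    have hc := Complex.exp_ne_zero (-(2 * π * I * B * (t:ℂ)))
    exact hnoroot (exp (2 * π * I * t) * z)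
      ⟨h1.resolve_left hc, h2.resolve_left hc⟩
  refine ⟨fun t _ => ⟨(hmonic p hpm hpd t).1, (hmonic p hpm hpd t).2,
      (hmonic q hqm hqd t).1, (hmonic q hqm hqd t).2, hnr t,
      spin_res B p q hpm hpd t⟩, ?_, ?_⟩
  · have h0 : ∀ r : Polynomial ℂ, spinPoly B r 0 = r := by
      intro r
      simp [spinPoly]
    have h1 : ∀ r : Polynomial ℂ, spinPoly B r 1 = r := by
      intro r
      have e1 : exp (2 * π * I * ((1:ℝ):ℂ)) = 1 := by
        rw [show (2 * π * I * ((1:ℝ):ℂ)) = 2 * π * I by push_cast; ring,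
          Complex.exp_two_pi_mul_I]
      have e2 : exp (-(2 * π * I * B * ((1:ℝ):ℂ))) = 1 := by
        have h : exp (2 * π * I * B * ((1:ℝ):ℂ)) = 1 := by
          rw [show (2 * π * I * B * ((1:ℝ):ℂ)) = (B:ℂ) * (2 * π * I) by push_cast; ring,
            Complex.exp_nat_mul, Complex.exp_two_pi_mul_I, one_pow]
        rw [Complex.exp_neg, h, inv_one]
      rw [spinPoly, e1, e2, map_one, one_mul, one_mul, comp_X]
    exact ⟨h0 p, h0 q, h1 p, h1 q⟩
  · have hR : res p q ≠ 0 := res_ne_zero B p q hpm hnoroot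
    have hpi : (π : ℂ) ≠ 0 := by exact_mod_cast Real.pi_ne_zero
    have ha : (2 * π * I * (B:ℂ) ^ 2) ≠ 0 := by
      exact mul_ne_zero (mul_ne_zero (mul_ne_zero two_ne_zero hpi) I_ne_zero)
        (pow_ne_zero _ (Nat.cast_ne_zero.mpr (by omega)))
    have hf : (fun s : ℝ => res (spinPoly B p s) (spinPoly B q s))
        = fun s : ℝ => exp (-(2 * π * I * (B:ℂ) ^ 2) * s) * res p q := by
      funext s
      rw [spin_res B p q hpm hpd s]
      congr 2
      ring
    have hderiv : ∀ t : ℝ,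
        deriv (fun s : ℝ => res (spinPoly B p s) (spinPoly B q s)) t
          = exp (-(2 * π * I * (B:ℂ) ^ 2) * t) * (-(2 * π * I * (B:ℂ) ^ 2) * 1) * res p q := by
      intro t
      rw [hf]
      have h1 : HasDerivAt (fun y : ℂ => exp (-(2 * π * I * (B:ℂ) ^ 2) * y) * res p q)
          (exp (-(2 * π * I * (B:ℂ) ^ 2) * (t:ℂ)) * (-(2 * π * I * (B:ℂ) ^ 2) * 1) * res p q)
          (t:ℂ) :=
        (((hasDerivAt_id ((t:ℝ):ℂ)).const_mul (-(2 * π * I * (B:ℂ) ^ 2))).cexp).mul_const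
          (res p q)
      exact (h1.comp_ofReal).deriv
    have hint : ∀ t : ℝ,
        deriv (fun s : ℝ => res (spinPoly B p s) (spinPoly B q s)) t /
          res (spinPoly B p t) (spinPoly B q t) = -(2 * π * I * (B:ℂ) ^ 2) := by
      intro t
      rw [hderiv t, show res (spinPoly B p t) (spinPoly B q t)
          = exp (-(2 * π * I * (B:ℂ) ^ 2) * t) * res p q from congrFun hf t]
      rw [mul_div_assoc]  -- maybe not needed
      field_simp
    simp only [hint]
    rw [intervalIntegral.integral_const]
    simp only [sub_zero, one_smul]
    have h2pi : (2 : ℂ) * π * I ≠ 0 :=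
      mul_ne_zero (mul_ne_zero two_ne_zero hpi) I_ne_zero
    field_simp
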